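/- Let δ > 0, η > 0, β > 0 and ∇ ≥ 0 be real constants. Then for every real τ > 0, the second derivative of H at τ equals H''(τ) = (δ/(β·τ³))·( (ηβ+1)^τ·( (τ·ln(ηβ+1) − 1)² + 1 ) − 2 ) + 2∇/τ³, and moreover H''(τ) ≥ 0 for every τ ≥ 1. -/

import Mathlib

section Aux

variable {δ η β nabla : ℝ}

private lemma aux_deriv1 (hβ : 0 < β) (hη : 0 < η) {τ : ℝ} (hτ : τ ≠ 0) :
    HasDerivAt (fun τ : ℝ => (((δ / β) * ((η * β + 1) ^ τ - 1) - η * δ * τ) + nabla) / τ)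
      (((δ / β) * ((η * β + 1) ^ τ * Real.log (η * β + 1)) - η * δ) * τ⁻¹
        + (((δ / β) * ((η * β + 1) ^ τ - 1) - η * δ * τ) + nabla) * (-(τ ^ 2)⁻¹)) τ := by
  have ha : (0:ℝ) < η * β + 1 := by positivity
  have h1 : HasDerivAt (fun s : ℝ => (η * β + 1) ^ s)
      ((η * β + 1) ^ τ * Real.log (η * β + 1)) τ :=
    (Real.hasStrictDerivAt_const_rpow ha τ).hasDerivAt
  have hphi : HasDerivAt (fun s : ℝ => ((δ / β) * ((η * β + 1) ^ s - 1) - η * δ * s) + nabla)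
      ((δ / β) * ((η * β + 1) ^ τ * Real.log (η * β + 1)) - η * δ) τ := by
    have := (((h1.sub_const 1).const_mul (δ / β)).sub
      ((hasDerivAt_id τ).const_mul (η * δ))).add_const nabla
    simpa [mul_comm] using this
  have hinv : HasDerivAt (fun s : ℝ => s⁻¹) (-(τ ^ 2)⁻¹) τ := hasDerivAt_inv hτ
  simpa [div_eq_mul_inv, Pi.mul_def] using hphi.mul hinv

private lemma aux_deriv2 (hβ : 0 < β) (hη : 0 < η) {τ : ℝ} (hτ : τ ≠ 0) :
    HasDerivAt (fun s : ℝ =>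
      ((δ / β) * ((η * β + 1) ^ s * Real.log (η * β + 1)) - η * δ) * s⁻¹
        + (((δ / β) * ((η * β + 1) ^ s - 1) - η * δ * s) + nabla) * (-(s ^ 2)⁻¹))
      ((δ / (β * τ ^ 3)) *
        ((η * β + 1) ^ τ * ((τ * Real.log (η * β + 1) - 1) ^ 2 + 1) - 2) +
        2 * nabla / τ ^ 3) τ := by
  have ha : (0:ℝ) < η * β + 1 := by positivity
  have h1 : HasDerivAt (fun s : ℝ => (η * β + 1) ^ s)
      ((η * β + 1) ^ τ * Real.log (η * β + 1)) τ :=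
    (Real.hasStrictDerivAt_const_rpow ha τ).hasDerivAt
  have hphi : HasDerivAt (fun s : ℝ => ((δ / β) * ((η * β + 1) ^ s - 1) - η * δ * s) + nabla)
      ((δ / β) * ((η * β + 1) ^ τ * Real.log (η * β + 1)) - η * δ) τ := by
    have := (((h1.sub_const 1).const_mul (δ / β)).sub
      ((hasDerivAt_id τ).const_mul (η * δ))).add_const nabla
    simpa [mul_comm] using this
  have hphi' : HasDerivAt (fun s : ℝ =>
      (δ / β) * ((η * β + 1) ^ s * Real.log (η * β + 1)) - η * δ)
      ((δ / β) * ((η * β + 1) ^ τ * Real.log (η * β + 1) * Real.log (η * β + 1))) τ := by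
    have := ((h1.mul_const (Real.log (η * β + 1))).const_mul (δ / β)).sub_const (η * δ)
    simpa [mul_assoc] using this
  have hinv : HasDerivAt (fun s : ℝ => s⁻¹) (-(τ ^ 2)⁻¹) τ := hasDerivAt_inv hτ
  have hsq : HasDerivAt (fun s : ℝ => (s ^ 2)⁻¹)
      (-(↑2 * τ ^ 1) / (τ ^ 2) ^ 2) τ :=
    (hasDerivAt_pow 2 τ).inv (pow_ne_zero 2 hτ)
  have h : HasDerivAt (fun s : ℝ =>
      ((δ / β) * ((η * β + 1) ^ s * Real.log (η * β + 1)) - η * δ) * s⁻¹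
        + (((δ / β) * ((η * β + 1) ^ s - 1) - η * δ * s) + nabla) * (-(s ^ 2)⁻¹)) _ τ :=
    (hphi'.mul hinv).add (hphi.mul hsq.neg)
  convert h using 1
  have hA : (0:ℝ) < (η * β + 1) ^ τ := Real.rpow_pos_of_pos ha τ
  field_simp
  ring

end Aux

/-- For δ, η, β > 0 and ∇ ≥ 0, the second derivative of `H(τ) = (φ(τ) + ∇)/τ` at any
`τ > 0` equals `(δ/(β·τ³))·((ηβ+1)^τ·((τ·ln(ηβ+1) − 1)² + 1) − 2) + 2∇/τ³`, and this
second derivative is nonnegative for every `τ ≥ 1`. -/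
theorem H_second_deriv (δ η β nabla : ℝ)
    (hδ : 0 < δ) (hη : 0 < η) (hβ : 0 < β) (hnabla : 0 ≤ nabla) :
    (∀ τ : ℝ, 0 < τ →
      iteratedDeriv 2
        (fun τ : ℝ => (((δ / β) * ((η * β + 1) ^ τ - 1) - η * δ * τ) + nabla) / τ) τ =
      (δ / (β * τ ^ 3)) *
        ((η * β + 1) ^ τ * ((τ * Real.log (η * β + 1) - 1) ^ 2 + 1) - 2) +
        2 * nabla / τ ^ 3) ∧
    (∀ τ : ℝ, 1 ≤ τ →
      0 ≤ iteratedDeriv 2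
        (fun τ : ℝ => (((δ / β) * ((η * β + 1) ^ τ - 1) - η * δ * τ) + nabla) / τ) τ) := by
  have key : ∀ τ : ℝ, 0 < τ →
      iteratedDeriv 2
        (fun τ : ℝ => (((δ / β) * ((η * β + 1) ^ τ - 1) - η * δ * τ) + nabla) / τ) τ =
      (δ / (β * τ ^ 3)) *
        ((η * β + 1) ^ τ * ((τ * Real.log (η * β + 1) - 1) ^ 2 + 1) - 2) +
        2 * nabla / τ ^ 3 := by
    intro τ hτ
    rw [iteratedDeriv_succ, iteratedDeriv_one]
    have hev : (deriv fun τ : ℝ => (((δ / β) * ((η * β + 1) ^ τ - 1) - η * δ * τ) + nabla) / τ)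
        =ᶠ[nhds τ] fun s : ℝ =>
          ((δ / β) * ((η * β + 1) ^ s * Real.log (η * β + 1)) - η * δ) * s⁻¹
            + (((δ / β) * ((η * β + 1) ^ s - 1) - η * δ * s) + nabla) * (-(s ^ 2)⁻¹) := by
      filter_upwards [eventually_ne_nhds hτ.ne'] with s hs
      exact (aux_deriv1 hβ hη hs).deriv
    rw [hev.deriv_eq]
    exact (aux_deriv2 hβ hη hτ.ne').deriv
  refine ⟨key, fun τ hτ => ?_⟩
  have hτ0 : (0:ℝ) < τ := lt_of_lt_of_le one_pos hτ
  rw [key τ hτ0]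
  have ha : (1:ℝ) < η * β + 1 := by nlinarith
  have hL : 0 ≤ Real.log (η * β + 1) := Real.log_nonneg ha.le
  set x := τ * Real.log (η * β + 1) with hx
  have hx0 : 0 ≤ x := mul_nonneg hτ0.le hL
  have hexp : (η * β + 1) ^ τ = Real.exp x := by
    rw [Real.rpow_def_of_pos (by linarith), hx]; ring_nf
  have hq : 1 + x + x ^ 2 / 2 ≤ Real.exp x := Real.quadratic_le_exp_of_nonneg hx0
  have hmain : (2:ℝ) ≤ (η * β + 1) ^ τ * ((x - 1) ^ 2 + 1) := by
    rw [hexp]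
    nlinarith [sq_nonneg (x - 1), sq_nonneg (x ^ 2), sq_nonneg x,
      mul_nonneg (sub_nonneg.mpr hq) (by positivity : (0:ℝ) ≤ (x - 1) ^ 2 + 1)]
  have h1 : 0 ≤ (δ / (β * τ ^ 3)) *
      ((η * β + 1) ^ τ * ((x - 1) ^ 2 + 1) - 2) := by
    apply mul_nonneg (by positivity) (by linarith)
  have h2 : 0 ≤ 2 * nabla / τ ^ 3 := by positivity
  linarith
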